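/- Fix (q₀,p₀) ∈ ℝ². Then the Husimi measures of the wave packets Φ^h_{(q₀,p₀)} converge weakly to the Dirac mass at (q₀,p₀) as h → 0⁺: for every bounded continuous function g : ℝ² → ℂ, the integral ∫_{ℝ²} h^{−1}·|⟨Φ^h_{(q₀,p₀)}, Φ^h_{(q,p)}⟩|² · g(q,p) dq dp tends to g(q₀,p₀) as h → 0⁺. -/

import Mathlib

open Real Complex MeasureTheory

noncomputable section

/-- Quantized translation `T^h_{(a,b)}`. -/
def Tq (h a b : ℝ) (u : ℝ → ℂ) : ℝ → ℂ := fun x =>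
  Complex.exp ((-(Real.pi * a * b / h) : ℝ) * Complex.I) *
    (Complex.exp ((2 * Real.pi * b * x / h : ℝ) * Complex.I) * u (x - a))

/-- Gaussian wave packet `Φ^h_{(q,p)}`. -/
def WP (h q p : ℝ) : ℝ → ℂ := fun x =>
  (((2 / h) ^ ((1 : ℝ) / 4) : ℝ) : ℂ) *
    (Complex.exp ((2 * Real.pi * p * (x - q) / h : ℝ) * Complex.I) *
      Complex.exp ((-(Real.pi * (x - q) ^ 2 / h) : ℝ) : ℂ))

/-- The L² inner product `⟨f, g⟩ = ∫ f x * conj (g x)`. -/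
def ip (f g : ℝ → ℂ) : ℂ := ∫ x : ℝ, f x * (starRingEnd ℂ) (g x)

/-- The `h`-Fourier transform. -/
def Fh (h : ℝ) (f : ℝ → ℂ) : ℝ → ℂ := fun ξ =>
  ((h : ℂ))⁻¹ * ∫ x : ℝ, Complex.exp ((-(2 * Real.pi * x * ξ / h) : ℝ) * Complex.I) * f x

/-- The metaplectic operator of the matrix `[[a,b],[c,d]]`. -/
def Mhat (h a b c d : ℝ) (f : ℝ → ℂ) : ℝ → ℂ := fun x =>
  ((Real.sqrt a)⁻¹ : ℂ) *
    ∫ ξ : ℝ,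
      Complex.exp ((2 * Real.pi * ((c * x ^ 2 - b * ξ ^ 2 + 2 * x * ξ) / (2 * a)) / h : ℝ) *
        Complex.I) * Fh h f ξ

theorem abs_ip_sq (h q₀ p₀ q p : ℝ) (hh : 0 < h) :
    (‖ip (WP h q₀ p₀) (WP h q p)‖)^2
      = Real.exp (-(Real.pi * ((q-q₀)^2+(p-p₀)^2)/h)) := by
  have hh' : (h:ℝ) ≠ 0 := ne_of_gt hh
  set A : ℝ := 2*Real.pi*(q₀+q)/h with hAdef
  set B : ℝ := 2*Real.pi*(p₀-p)/h with hBdef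
  set b : ℂ := -(2*Real.pi/h) with hbdef
  set c : ℂ := (A : ℂ) + (B : ℂ)*Complex.I with hcdef
  set d : ℂ := (-(Real.pi*(q₀^2+q^2)/h) : ℝ) + (2*Real.pi*(p*q - p₀*q₀)/h : ℝ)*Complex.I with hddef
  have hbr : b = ((-(2*Real.pi/h) : ℝ) : ℂ) := by push_cast; ring
  have hb : b.re < 0 := by
    rw [hbr, Complex.ofReal_re]
    exact neg_lt_zero.mpr (by positivity)
  have key : ip (WP h q₀ p₀) (WP h q p)
      = (((2/h)^((1:ℝ)/4) : ℝ) : ℂ)^2 * ((↑Real.pi / -b) ^ (1/2 : ℂ) * Complex.exp (d - c^2 / (4*b))) := by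
    rw [ip]
    have heq : ∀ x : ℝ, WP h q₀ p₀ x * (starRingEnd ℂ) (WP h q p x)
        = (((2/h)^((1:ℝ)/4) : ℝ) : ℂ)^2 * Complex.exp (b*x^2 + c*x + d) := by
      intro x
      simp only [WP, map_mul, Complex.conj_ofReal, ← Complex.exp_conj, map_mul, Complex.conj_I,
        Complex.conj_ofReal]
      rw [mul_mul_mul_comm, ← Complex.exp_add, ← Complex.exp_add, ← Complex.exp_add, ← sq]
      congr 1
      simp only [hbdef, hcdef, hddef, hAdef, hBdef]
      push_cast
      ring
    simp_rw [heq]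
    rw [integral_const_mul, integral_cexp_quadratic hb c d]
  have hratio : (↑Real.pi / -b : ℂ) = ((h/2 : ℝ) : ℂ) := by
    rw [hbr, show -((-(2*Real.pi/h) : ℝ):ℂ) = (((2*Real.pi/h) : ℝ):ℂ) by push_cast; ring,
      ← Complex.ofReal_div]
    norm_cast
    rw [div_div_eq_mul_div, mul_comm, mul_div_assoc, mul_comm 2 Real.pi,
      div_mul_eq_div_div, div_self Real.pi_ne_zero, mul_one_div]
  have hc2 : c^2 = ((A^2-B^2:ℝ):ℂ) + ((2*A*B:ℝ):ℂ)*Complex.I := by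
    rw [hcdef]; push_cast; ring_nf; rw [Complex.I_sq]; ring
  have h4b : (4:ℂ)*b = ((4*(-(2*Real.pi/h)):ℝ):ℂ) := by rw [hbr]; push_cast; ring
  have hre : (d - c^2/(4*b)).re = -(Real.pi*((q-q₀)^2+(p-p₀)^2)/h)/2 := by
    rw [hc2, h4b, Complex.sub_re, hddef]
    simp only [Complex.div_ofReal_re, Complex.add_re, Complex.ofReal_re, Complex.mul_re,
      Complex.I_re, Complex.ofReal_im, Complex.I_im, mul_zero, mul_one, zero_sub, sub_zero,
      mul_zero, zero_mul]
    rw [hAdef, hBdef]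
    field_simp
    ring
  rw [key, hratio]
  rw [norm_mul, norm_mul, Complex.norm_exp, hre]
  rw [Complex.norm_cpow_eq_rpow_re_of_pos (by positivity : (0:ℝ) < h/2)]
  rw [show ((1:ℂ)/2).re = (1/2 : ℝ) by norm_num]
  rw [norm_pow, Complex.norm_real, Real.norm_eq_abs, _root_.abs_of_nonneg (by positivity : (0:ℝ) ≤ (2/h)^((1:ℝ)/4))]
  set u : ℝ := -(Real.pi*((q-q₀)^2+(p-p₀)^2)/h)
  have hX : ((2/h)^((1:ℝ)/4))^(4:ℕ) = 2/h := by
    rw [← Real.rpow_natCast ((2/h)^((1:ℝ)/4)) 4, ← Real.rpow_mul (by positivity)]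
    norm_num
  have hY : ((h/2)^((1:ℝ)/2))^(2:ℕ) = h/2 := by
    rw [← Real.rpow_natCast ((h/2)^((1:ℝ)/2)) 2, ← Real.rpow_mul (by positivity)]
    norm_num
  calc (((2/h)^((1:ℝ)/4))^2 * ((h/2)^((1:ℝ)/2) * Real.exp (u/2)))^2
      = (((2/h)^((1:ℝ)/4))^(4:ℕ) * ((h/2)^((1:ℝ)/2))^(2:ℕ)) * (Real.exp (u/2))^2 := by ring
    _ = Real.exp u := by
        rw [hX, hY, show (2:ℝ)/h*(h/2) = 1 by field_simp, one_mul, sq, ← Real.exp_add]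
        norm_num

theorem lemB (q₀ p₀ : ℝ) (g : ℝ × ℝ → ℂ)
    (hgb : ∃ C : ℝ, ∀ z, ‖g z‖ ≤ C) (hgc : Continuous g) :
    Filter.Tendsto
      (fun h : ℝ => ∫ z : ℝ × ℝ,
        ((h⁻¹ * Real.exp (-(Real.pi * ((z.1-q₀)^2+(z.2-p₀)^2)/h)) : ℝ) : ℂ) * g z)
      (nhdsWithin 0 (Set.Ioi 0)) (nhds (g (q₀, p₀))) := by
  obtain ⟨C, hC⟩ := hgb
  set z₀ : ℝ × ℝ := (q₀, p₀) with hz₀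
  set G : ℝ → ℝ × ℝ → ℂ := fun h w =>
    ((Real.exp (-(Real.pi * (w.1^2+w.2^2))) : ℝ) : ℂ) * g (z₀ + Real.sqrt h • w) with hGdef
  -- Step 1: for h > 0 the two integrals agree
  have step1 : ∀ h : ℝ, 0 < h →
      (∫ z : ℝ × ℝ,
        ((h⁻¹ * Real.exp (-(Real.pi * ((z.1-q₀)^2+(z.2-p₀)^2)/h)) : ℝ) : ℂ) * g z)
      = ∫ w : ℝ × ℝ, G h w := by
    intro h hh
    have hh' : h ≠ 0 := ne_of_gt hh
    set s : ℝ := Real.sqrt h with hsdef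
    have hs2 : s ^ 2 = h := Real.sq_sqrt hh.le
    set f : ℝ × ℝ → ℂ := fun z =>
      ((h⁻¹ * Real.exp (-(Real.pi * ((z.1-q₀)^2+(z.2-p₀)^2)/h)) : ℝ) : ℂ) * g z with hfdef
    have key : ∀ w : ℝ × ℝ, G h w = h • f (z₀ + s • w) := by
      intro w
      have h1 : (z₀ + s • w).1 = q₀ + s * w.1 := rfl
      have h2 : (z₀ + s • w).2 = p₀ + s * w.2 := rfl
      simp only [hGdef, hfdef, h1, h2]
      have hE : h⁻¹ * Real.exp (-(Real.pi * ((q₀ + s*w.1 - q₀)^2+(p₀ + s*w.2 - p₀)^2)/h))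
          = h⁻¹ * Real.exp (-(Real.pi * (w.1^2+w.2^2))) := by
        congr 2
        rw [show q₀ + s*w.1 - q₀ = s*w.1 by ring, show p₀ + s*w.2 - p₀ = s*w.2 by ring]
        rw [mul_pow, mul_pow, ← mul_add, ← mul_assoc, mul_comm Real.pi (s^2), hs2]
        field_simp
      rw [hE, Complex.real_smul]
      push_cast
      rw [← mul_assoc, ← mul_assoc, mul_inv_cancel₀ (Complex.ofReal_ne_zero.mpr hh'), one_mul]
    calc (∫ z : ℝ × ℝ, f z) = ∫ w : ℝ × ℝ, f (z₀ + w) :=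
          (MeasureTheory.integral_add_left_eq_self (μ := (volume : Measure (ℝ×ℝ))) f z₀).symm
      _ = (s^2) • ∫ w : ℝ × ℝ, f (z₀ + s • w) := by
          have := MeasureTheory.Measure.integral_comp_smul (volume : Measure (ℝ×ℝ))
            (fun w => f (z₀ + w)) s
          norm_num [Module.finrank_prod] at this
          have hs0 : s^2 ≠ 0 := by rw [hs2]; exact hh'
          rw [this, Complex.real_smul, ← mul_assoc]
          push_cast
          rw [mul_inv_cancel₀ (by exact_mod_cast hs0), one_mul]
      _ = ∫ w : ℝ × ℝ, G h w := by
          rw [hs2, ← integral_smul]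
          exact integral_congr_ae (Filter.Eventually.of_forall fun w => (key w).symm)
  -- gaussian integrand split
  have hsplit : (fun w : ℝ×ℝ => Real.exp (-(Real.pi*(w.1^2+w.2^2))))
      = fun w : ℝ×ℝ => Real.exp (-Real.pi*w.1^2) * Real.exp (-Real.pi*w.2^2) := by
    funext w; rw [← Real.exp_add]; ring_nf
  have hgint : Integrable (fun w : ℝ×ℝ => Real.exp (-(Real.pi*(w.1^2+w.2^2)))) := by
    rw [hsplit, show (volume : Measure (ℝ×ℝ)) = (volume : Measure ℝ).prod volume from rfl]
    exact (integrable_exp_neg_mul_sq Real.pi_pos).mul_prod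
      (integrable_exp_neg_mul_sq Real.pi_pos)
  have hgval : ∫ w : ℝ×ℝ, Real.exp (-(Real.pi*(w.1^2+w.2^2))) = 1 := by
    rw [hsplit, show (volume : Measure (ℝ×ℝ)) = (volume : Measure ℝ).prod volume from rfl,
      integral_prod_mul (f := fun x : ℝ => Real.exp (-Real.pi*x^2))
        (g := fun x : ℝ => Real.exp (-Real.pi*x^2)), integral_gaussian, div_self Real.pi_ne_zero, Real.sqrt_one,
      mul_one]
  set C' : ℝ := max C 0 with hC'def
  have hC' : ∀ z, ‖g z‖ ≤ C' := fun z => le_trans (hC z) (le_max_left _ _)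
  have hsq : Filter.Tendsto Real.sqrt (nhdsWithin 0 (Set.Ioi 0)) (nhds 0) := by
    have := (Real.continuous_sqrt.tendsto 0).mono_left
      (nhdsWithin_le_nhds (s := Set.Ioi 0) (a := (0:ℝ)))
    simpa using this
  have step2 : Filter.Tendsto (fun h : ℝ => ∫ w : ℝ×ℝ, G h w)
      (nhdsWithin 0 (Set.Ioi 0)) (nhds (g z₀)) := by
    have hval : ∫ w : ℝ×ℝ, ((Real.exp (-(Real.pi*(w.1^2+w.2^2))) : ℝ):ℂ) * g z₀ = g z₀ := by
      rw [integral_mul_const]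
      have h1 : (∫ a : ℝ×ℝ, ((Real.exp (-(Real.pi*(a.1^2+a.2^2))) : ℝ):ℂ))
          = ((∫ a : ℝ×ℝ, Real.exp (-(Real.pi*(a.1^2+a.2^2))) : ℝ):ℂ) := integral_ofReal
      rw [h1, hgval]
      simp
    rw [← hval]
    apply MeasureTheory.tendsto_integral_filter_of_dominated_convergence
      (bound := fun w : ℝ×ℝ => Real.exp (-(Real.pi*(w.1^2+w.2^2))) * C')
    · refine Filter.Eventually.of_forall fun h => Continuous.aestronglyMeasurable ?_
      apply Continuous.mul
      · exact Complex.continuous_ofReal.comp (Real.continuous_exp.comp (by continuity))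
      · exact hgc.comp (by continuity)
    · refine Filter.Eventually.of_forall fun h => Filter.Eventually.of_forall fun w => ?_
      rw [hGdef]
      simp only [norm_mul, Complex.norm_real, Real.norm_eq_abs,
        _root_.abs_of_nonneg (Real.exp_nonneg _)]
      exact mul_le_mul_of_nonneg_left (hC' _) (Real.exp_nonneg _)
    · exact hgint.mul_const C'
    · refine Filter.Eventually.of_forall fun w => ?_
      apply Filter.Tendsto.const_mul
      refine (hgc.tendsto z₀).comp ?_
      have : Filter.Tendsto (fun h : ℝ => z₀ + Real.sqrt h • w)
          (nhdsWithin 0 (Set.Ioi 0)) (nhds (z₀ + (0:ℝ) • w)) :=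
        ((hsq.smul_const w).const_add z₀)
      simpa using this
  refine step2.congr' ?_
  filter_upwards [eventually_mem_nhdsWithin] with h hh
  exact (step1 h hh).symm

theorem husimi_wave_packet_tendsto_dirac (q₀ p₀ : ℝ) (g : ℝ × ℝ → ℂ)
    (hgb : ∃ C : ℝ, ∀ z, ‖g z‖ ≤ C) (hgc : Continuous g) :
    Filter.Tendsto
      (fun h : ℝ =>
        ∫ z : ℝ × ℝ,
          ((h⁻¹ * ‖ip (WP h q₀ p₀) (WP h z.1 z.2)‖ ^ 2 : ℝ) : ℂ) * g z)
      (nhdsWithin 0 (Set.Ioi 0)) (nhds (g (q₀, p₀))) := by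
  refine (lemB q₀ p₀ g hgb hgc).congr' ?_
  filter_upwards [eventually_mem_nhdsWithin] with h hh
  exact integral_congr_ae (Filter.Eventually.of_forall fun z => by
    simp only []
    rw [abs_ip_sq h q₀ p₀ z.1 z.2 hh])
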